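/- Let ū_h ∈ U with ‖ū_h‖_{X*} ≤ 1/α and ȳ_h ∈ Y be arbitrary; set ŷ := A⁻¹(Bū_h) and ρ_y := Aȳ_h − Bū_h ∈ W*. Then ‖Cŷ − Cȳ‖_G² ≤ ‖Cŷ − g^δ‖_G² − ‖Cȳ − g^δ‖_G² ≤ (2/α)‖B*ŵ‖_X − 2·ū_h(B*ŵ) + ‖C(A⁻¹ρ_y)‖_G². -/

import Mathlib

open RealInnerProductSpace NormedSpace

set_option maxHeartbeats 1000000

/-- A posteriori error estimate for Ivanov regularization of a PDE-constrained
problem: estimate at the exact state ŷ = A⁻¹(Bū_h). -/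
theorem stmt_6
    {X G Y W : Type*}
    [NormedAddCommGroup X] [NormedSpace ℝ X] [CompleteSpace X]
    [NormedAddCommGroup G] [InnerProductSpace ℝ G] [CompleteSpace G]
    [NormedAddCommGroup Y] [NormedSpace ℝ Y] [CompleteSpace Y]
    [NormedAddCommGroup W] [NormedSpace ℝ W] [CompleteSpace W]
    (A : Y ≃L[ℝ] StrongDual ℝ W) (Astar : W ≃L[ℝ] StrongDual ℝ Y)
    (hAadj : ∀ (y : Y) (w : W), A y w = Astar w y)
    (Bstar : W →L[ℝ] X) (B : StrongDual ℝ X →L[ℝ] StrongDual ℝ W)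
    (hB : ∀ (u : StrongDual ℝ X) (w : W), B u w = u (Bstar w))
    (C : Y →L[ℝ] G) (Cstar : G →L[ℝ] StrongDual ℝ Y)
    (hCadj : ∀ (y : Y) (g : G), ⟪C y, g⟫ = Cstar g y)
    (gδ : G) (α : ℝ) (hα : 0 < α)
    (ubar : StrongDual ℝ X) (ybar : Y)
    (hubar : ‖ubar‖ ≤ 1/α) (hybar : ybar = A.symm (B ubar))
    (hmin : ∀ u : StrongDual ℝ X, ‖u‖ ≤ 1/α →
      (1/2) * ‖C ybar - gδ‖^2 ≤ (1/2) * ‖C (A.symm (B u)) - gδ‖^2)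
    (yh : Y) (what : W)
    (hwhat : what = Astar.symm (-(Cstar (C yh - gδ))))
    (uh : StrongDual ℝ X) (huh : ‖uh‖ ≤ 1/α) :
    ‖C (A.symm (B uh)) - C ybar‖^2 ≤
      ‖C (A.symm (B uh)) - gδ‖^2 - ‖C ybar - gδ‖^2 ∧
    ‖C (A.symm (B uh)) - gδ‖^2 - ‖C ybar - gδ‖^2 ≤
      (2/α) * ‖Bstar what‖ - 2 * uh (Bstar what)
      + ‖C (A.symm (A yh - B uh))‖^2 := by
  set yhat := A.symm (B uh) with hyhat
  have hAyhat : A yhat = B uh := A.apply_symm_apply _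
  have hAybar : A ybar = B ubar := by rw [hybar]; exact A.apply_symm_apply _
  have hAw : (Astar what : StrongDual ℝ Y) = -(Cstar (C yh - gδ)) := by
    rw [hwhat]; exact Astar.apply_symm_apply _
  have key : ∀ z : Y, ⟪C z, C yh - gδ⟫ = -(A z what) := by
    intro z
    rw [hCadj, hAadj]
    have h1 : (Astar what) z = (-(Cstar (C yh - gδ))) z := by rw [hAw]
    simp only [ContinuousLinearMap.neg_apply] at h1
    linarith
  -- variational inequality from minimality
  have hd : 0 ≤ ⟪C ybar - gδ, C yhat - C ybar⟫ := by
    by_contra hneg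
    push_neg at hneg
    set d := ⟪C ybar - gδ, C yhat - C ybar⟫ with hdd
    set M := ‖C yhat - C ybar‖^2 with hM
    have hM0 : (0:ℝ) ≤ M := by positivity
    have hM1 : (0:ℝ) < M + 1 := by linarith
    set t := min 1 (-d/(M+1)) with ht
    have ht0 : 0 < t := lt_min one_pos (div_pos (by linarith) hM1)
    have ht1 : t ≤ 1 := min_le_left _ _
    have h3 : t * (M+1) ≤ -d := by
      have hle := min_le_right 1 (-d/(M+1))
      calc t * (M+1) ≤ (-d/(M+1)) * (M+1) :=
            mul_le_mul_of_nonneg_right hle hM1.le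
        _ = -d := by field_simp
    have hfeas : ‖ubar + t • (uh - ubar)‖ ≤ 1/α := by
      have hrw : ubar + t • (uh - ubar) = (1-t) • ubar + t • uh := by module
      rw [hrw]
      calc ‖(1-t) • ubar + t • uh‖ ≤ ‖(1-t) • ubar‖ + ‖t • uh‖ := norm_add_le _ _
        _ = (1-t) * ‖ubar‖ + t * ‖uh‖ := by
            rw [norm_smul, norm_smul, Real.norm_eq_abs, Real.norm_eq_abs,
              abs_of_nonneg (by linarith), abs_of_nonneg ht0.le]
        _ ≤ (1-t) * (1/α) + t * (1/α) := by
            apply add_le_add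
            · exact mul_le_mul_of_nonneg_left hubar (by linarith)
            · exact mul_le_mul_of_nonneg_left huh ht0.le
        _ = 1/α := by ring
    have hmin' := hmin _ hfeas
    have hstate : A.symm (B (ubar + t • (uh - ubar))) = ybar + t • (yhat - ybar) := by
      rw [map_add, map_smul, map_sub, map_add, map_smul, map_sub, hybar, hyhat]
    rw [hstate] at hmin'
    have hexp : C (ybar + t • (yhat - ybar)) - gδ
        = (C ybar - gδ) + t • (C yhat - C ybar) := by
      rw [map_add, map_smul, map_sub]; abel
    rw [hexp, norm_add_sq_real, real_inner_smul_right, norm_smul,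
      Real.norm_eq_abs, abs_of_nonneg ht0.le, mul_pow] at hmin'
    rw [← hdd, ← hM] at hmin'
    clear_value t d M
    have h2 : 0 ≤ t * d + t^2 * M / 2 := by nlinarith
    nlinarith [mul_le_mul_of_nonneg_left h3 ht0.le, mul_pos ht0 ht0,
      mul_pos ht0 (neg_pos.2 hneg)]
  have e1 : ⟪C yhat - C ybar, C yh - gδ⟫ = ubar (Bstar what) - uh (Bstar what) := by
    have hk := key (yhat - ybar)
    rw [map_sub, map_sub, hAyhat, hAybar, ContinuousLinearMap.sub_apply, hB, hB] at hk
    linarith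
  have e2 : C (A.symm (A yh - B uh)) = C yh - C yhat := by
    rw [map_sub, A.symm_apply_apply, map_sub, hyhat]
  have e2sq : ‖C yhat - C yh‖^2 = ‖C (A.symm (A yh - B uh))‖^2 := by
    rw [e2, norm_sub_rev]
  have e3 : ubar (Bstar what) ≤ (1/α) * ‖Bstar what‖ := by
    calc ubar (Bstar what) ≤ ‖ubar (Bstar what)‖ := by
            rw [Real.norm_eq_abs]; exact le_abs_self _
      _ ≤ ‖ubar‖ * ‖Bstar what‖ := ubar.le_opNorm _
      _ ≤ (1/α) * ‖Bstar what‖ :=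
          mul_le_mul_of_nonneg_right hubar (norm_nonneg _)
  have hid : ‖C yhat - gδ‖^2 - ‖C ybar - gδ‖^2
      = 2*⟪C yhat - C ybar, C yh - gδ⟫ + ‖C yhat - C yh‖^2 - ‖C ybar - C yh‖^2 := by
    have h1 : C yhat - gδ = (C yhat - C yh) + (C yh - gδ) := by abel
    have h2 : C ybar - gδ = (C ybar - C yh) + (C yh - gδ) := by abel
    have h4 : C yhat - C ybar = (C yhat - C yh) - (C ybar - C yh) := by abel
    rw [h1, h2, norm_add_sq_real, norm_add_sq_real, h4]
    simp only [inner_sub_left]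
    ring
  constructor
  · have hexp1 : C yhat - gδ = (C ybar - gδ) + (C yhat - C ybar) := by abel
    rw [hexp1, norm_add_sq_real]
    linarith
  · have h2α : 2/α = 2*(1/α) := by ring
    have hnn : (0:ℝ) ≤ ‖C ybar - C yh‖^2 := by positivity
    rw [h2α]
    linarith
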